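/- Let T be a path with vertices v_1,…,v_n in order and c : V(T) → ℕ a weight function with c(v) ≥ C ≥ 1 for all v. Let P be the path whose vertices are the copies v_i^r (1 ≤ r ≤ c(v_i)) arranged in the order v_1^1,…,v_1^{c(v_1)}, v_2^1,…, v_n^{c(v_n)}. Then for any two copies x, y one has d_T(x*, y*) ≤ (d_P(x,y) − 1)/C + 1, where x*, y* are the original vertices of x and y. -/
import Mathlib


open scoped Classical
open Finset

noncomputable def steinerDist {V : Type*} (G : SimpleGraph V) (S : Finset V) : ℕ :=
  sInf {m : ℕ | ∃ H : G.Subgraph, H.Connected ∧ ↑S ⊆ H.verts ∧ H.edgeSet.ncard = m}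

noncomputable def swk {V : Type*} [Fintype V] (k : ℕ) (G : SimpleGraph V) : ℕ :=
  ∑ S ∈ Finset.powersetCard k (Finset.univ : Finset V), steinerDist G S

noncomputable def wswk {V : Type*} [Fintype V] (k : ℕ) (G : SimpleGraph V) (c : V → ℕ) : ℕ :=
  ∑ S ∈ Finset.powersetCard k (Finset.univ : Finset (Σ v : V, Fin (c v))), steinerDist G (S.image Sigma.fst)

lemma pathGraph_walk_ge {n : ℕ} {a b : Fin n}
    (w : (SimpleGraph.pathGraph n).Walk a b) :
    ((b : ℕ) : ℤ) - ((a : ℕ) : ℤ) ≤ (w.length : ℤ) := by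
  induction w with
  | nil => simp
  | cons h p ih =>
    rw [SimpleGraph.pathGraph_adj] at h
    simp only [SimpleGraph.Walk.length_cons]
    push_cast
    omega

lemma pathGraph_dist_ge {n : ℕ} (a b : Fin n) :
    ((b : ℕ) : ℤ) - ((a : ℕ) : ℤ) ≤ ((SimpleGraph.pathGraph n).dist a b : ℤ) := by
  have hr : (SimpleGraph.pathGraph n).Reachable a b :=
    SimpleGraph.pathGraph_preconnected n a b
  obtain ⟨w, hw⟩ := hr.exists_walk_length_eq_dist
  calc ((b : ℕ) : ℤ) - ((a : ℕ) : ℤ) ≤ (w.length : ℤ) := pathGraph_walk_ge w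
    _ = _ := by rw [hw]

lemma pathGraph_walk_exists {n : ℕ} (k : ℕ) :
    ∀ a b : Fin n, (b : ℕ) = (a : ℕ) + k →
      ∃ w : (SimpleGraph.pathGraph n).Walk a b, w.length = k := by
  induction k with
  | zero =>
    intro a b h
    have : a = b := Fin.ext (by omega)
    subst this
    exact ⟨SimpleGraph.Walk.nil, rfl⟩
  | succ k ih =>
    intro a b h
    have ha' : (a : ℕ) + 1 < n := by have := b.isLt; omega
    set a' : Fin n := ⟨(a : ℕ) + 1, ha'⟩ with ha'def
    have hadj : (SimpleGraph.pathGraph n).Adj a a' := by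
      rw [SimpleGraph.pathGraph_adj]; left; rfl
    obtain ⟨w, hw⟩ := ih a' b (by simp [ha'def]; omega)
    exact ⟨SimpleGraph.Walk.cons hadj w, by simp [hw]⟩

lemma pathGraph_dist_le {n : ℕ} (a b : Fin n) (h : (a : ℕ) ≤ (b : ℕ)) :
    (SimpleGraph.pathGraph n).dist a b ≤ (b : ℕ) - (a : ℕ) := by
  obtain ⟨w, hw⟩ := pathGraph_walk_exists ((b : ℕ) - (a : ℕ)) a b (by omega)
  calc (SimpleGraph.pathGraph n).dist a b ≤ w.length := SimpleGraph.dist_le w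
    _ = _ := hw

/-- if T is a path v_1,…,v_n with weights c(v) ≥ C ≥ 1, and P is the path
on the copies of the vertices of T arranged in the induced (lexicographic) order, then
for any two copies x, y we have d_T(x*,y*) ≤ (d_P(x,y) − 1)/C + 1, i.e.
C·d_T(x*,y*) ≤ d_P(x,y) + C − 1. -/
theorem path_contraction_distance (n : ℕ) (c : Fin n → ℕ) (C : ℕ) (hC : 1 ≤ C)
    (hc : ∀ i, C ≤ c i)
    (e : (Σ i : Fin n, Fin (c i)) ≃ Fin (∑ i, c i))
    (he : ∀ x y : Σ i : Fin n, Fin (c i),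
      e x < e y ↔ (x.1 < y.1 ∨ (x.1 = y.1 ∧ (x.2 : ℕ) < (y.2 : ℕ))))
    (x y : Σ i : Fin n, Fin (c i)) :
    (C : ℤ) * (SimpleGraph.pathGraph n).dist x.1 y.1 ≤
      ((SimpleGraph.pathGraph (∑ i, c i)).dist (e x) (e y) : ℤ) + C - 1 := by
  -- main lemma for the case x.1 < y.1
  have key : ∀ x y : Σ i : Fin n, Fin (c i), x.1 < y.1 →
      (C : ℤ) * (SimpleGraph.pathGraph n).dist x.1 y.1 ≤
        ((SimpleGraph.pathGraph (∑ i, c i)).dist (e x) (e y) : ℤ) + C - 1 := by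
    intro x y hxy
    set a := (x.1 : ℕ) with hadef
    set b := (y.1 : ℕ) with hbdef
    have hab : a < b := hxy
    -- dist in T is at most b - a
    have hT : (SimpleGraph.pathGraph n).dist x.1 y.1 ≤ b - a :=
      pathGraph_dist_le x.1 y.1 (le_of_lt hab)
    -- counting: each copy of a vertex strictly between, plus y itself,
    -- lies in the interval (e x, e y]
    set S : Finset (Σ i : Fin n, Fin (c i)) :=
      ((Finset.Ioo x.1 y.1).sigma (fun i => (Finset.univ : Finset (Fin (c i))))) ∪ {y}
      with hSdef
    have hsub : S.image e ⊆ Finset.Ioc (e x) (e y) := by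
      intro m hm
      simp only [Finset.mem_image] at hm
      obtain ⟨z, hz, rfl⟩ := hm
      rw [hSdef, Finset.mem_union, Finset.mem_sigma, Finset.mem_Ioo] at hz
      rw [Finset.mem_Ioc]
      rcases hz with ⟨⟨hz1, hz2⟩, _⟩ | hz
      · constructor
        · rw [he]; left; exact hz1
        · exact le_of_lt ((he z y).mpr (Or.inl hz2))
      · rw [Finset.mem_singleton] at hz
        subst hz
        exact ⟨(he x z).mpr (Or.inl hxy), le_refl _⟩
    have hcardIoc : (Finset.Ioc (e x) (e y)).card = (e y : ℕ) - (e x : ℕ) := Fin.card_Ioc _ _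
    have hScard : S.card = (∑ i ∈ Finset.Ioo x.1 y.1, c i) + 1 := by
      rw [hSdef, Finset.card_union_of_disjoint, Finset.card_sigma]
      · simp
      · simp only [Finset.disjoint_singleton_right, Finset.mem_sigma, Finset.mem_Ioo]
        intro h
        exact absurd h.1.2 (lt_irrefl _)
    have hsum : C * (b - a - 1) ≤ ∑ i ∈ Finset.Ioo x.1 y.1, c i := by
      calc C * (b - a - 1) = ∑ _i ∈ Finset.Ioo x.1 y.1, C := by
            rw [Finset.sum_const, smul_eq_mul, Fin.card_Ioo, mul_comm]
        _ ≤ _ := Finset.sum_le_sum (fun i _ => hc i)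
    have hcount : C * (b - a - 1) + 1 ≤ (e y : ℕ) - (e x : ℕ) := by
      have h1 : S.card ≤ (Finset.Ioc (e x) (e y)).card := by
        rw [← Finset.card_image_of_injective S e.injective]
        exact Finset.card_le_card hsub
      omega
    have hexy : (e x : ℕ) < (e y : ℕ) := (he x y).mpr (Or.inl hxy)
    -- dist in P is at least e y - e x
    have hP : ((e y : ℕ) : ℤ) - ((e x : ℕ) : ℤ) ≤
        ((SimpleGraph.pathGraph (∑ i, c i)).dist (e x) (e y) : ℤ) :=
      pathGraph_dist_ge (e x) (e y)
    have hT' : ((SimpleGraph.pathGraph n).dist x.1 y.1 : ℤ) ≤ (b : ℤ) - (a : ℤ) := by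
      have := hT; omega
    have : (C : ℤ) * (SimpleGraph.pathGraph n).dist x.1 y.1 ≤ (C : ℤ) * ((b : ℤ) - (a : ℤ)) :=
      mul_le_mul_of_nonneg_left hT' (by positivity)
    have hcount' : (C : ℤ) * ((b : ℤ) - (a : ℤ) - 1) + 1 ≤ ((e y : ℕ) : ℤ) - ((e x : ℕ) : ℤ) := by
      have := hcount
      have h2 : (C : ℤ) * ((b : ℤ) - (a : ℤ) - 1) + 1 = ((C * (b - a - 1) + 1 : ℕ) : ℤ) := by
        push_cast [Nat.sub_sub]; ring_nf; rw [Nat.cast_sub (by omega)]; push_cast; ring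
      rw [h2]
      omega
    nlinarith [hP, hcount', this]
  rcases lt_trichotomy x.1 y.1 with h | h | h
  · exact key x y h
  · -- same original vertex: LHS is 0
    have hd : (SimpleGraph.pathGraph n).dist x.1 y.1 = 0 := by rw [h, SimpleGraph.dist_self]
    rw [hd]
    have : (0 : ℤ) ≤ ((SimpleGraph.pathGraph (∑ i, c i)).dist (e x) (e y) : ℤ) := by positivity
    omega
  · have := key y x h
    rwa [SimpleGraph.dist_comm, SimpleGraph.dist_comm (u := e y)] at this
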